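/- Every orientation of the Wagner graph V8 admits an acyclic 2-colouring. -/
import Mathlib


def AcyclicOn {V : Type*} (A : V → V → Prop) (X : Set V) : Prop :=
  ∀ v ∈ X, ¬ Relation.TransGen (fun a b => a ∈ X ∧ b ∈ X ∧ A a b) v v

def IsAcyclicColoring {V : Type*} (A : V → V → Prop) (k : ℕ) (c : V → Fin k) : Prop :=
  ∀ i : Fin k, AcyclicOn A {v | c v = i}

def IsOrientation {V : Type*} (G : SimpleGraph V) (A : V → V → Prop) : Prop :=
  (∀ a b, A a b → ¬ A b a) ∧ (∀ a b, G.Adj a b ↔ (A a b ∨ A b a))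

def SimpleGraph.IsMinor {W V : Type*} (H : SimpleGraph W) (G : SimpleGraph V) : Prop :=
  ∃ f : W → Set V, (∀ w, (f w).Nonempty) ∧ (∀ w, (G.induce (f w)).Connected) ∧
    (Pairwise fun w w' => Disjoint (f w) (f w')) ∧
    ∀ ⦃w w'⦄, H.Adj w w' → ∃ u ∈ f w, ∃ v ∈ f w', G.Adj u v

def SimpleGraph.Planar {V : Type*} (G : SimpleGraph V) : Prop :=
  ¬ (completeGraph (Fin 5)).IsMinor G ∧ ¬ (completeBipartiteGraph (Fin 3) (Fin 3)).IsMinor G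

def IsPlanarTriangulation {V : Type*} [Finite V] (G : SimpleGraph V) : Prop :=
  3 ≤ Nat.card V ∧ G.Planar ∧ ∀ H : SimpleGraph V, G ≤ H → H.Planar → H = G

def IsTriangle {V : Type*} (G : SimpleGraph V) (a b c : V) : Prop :=
  G.Adj a b ∧ G.Adj a c ∧ G.Adj b c

def IsFacialTriangle {V : Type*} (G : SimpleGraph V) (a b c : V) : Prop :=
  IsTriangle G a b c ∧ (G.induce {v | v ≠ a ∧ v ≠ b ∧ v ≠ c}).Preconnected

def IsSeparatingTriangle {V : Type*} (G : SimpleGraph V) (a b c : V) : Prop :=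
  IsTriangle G a b c ∧ ¬ (G.induce {v | v ≠ a ∧ v ≠ b ∧ v ≠ c}).Preconnected

def FourConnected {V : Type*} [Finite V] (G : SimpleGraph V) : Prop :=
  5 ≤ Nat.card V ∧ ∀ S : Set V, Nat.card S ≤ 3 → (G.induce Sᶜ).Connected

/-- The Wagner graph V8 on ZMod 8. -/
def WagnerGraph : SimpleGraph (ZMod 8) :=
  SimpleGraph.fromRel (fun i j => j = i + 1 ∨ j = i + 4)


theorem acyclicOn_of_mono {V : Type*} (A : V → V → Prop) (X : Set V) (f : V → ℤ)
    (h : ∀ a ∈ X, ∀ b ∈ X, A a b → f a < f b) : AcyclicOn A X := by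
  intro v hv hT
  have key : ∀ w, Relation.TransGen (fun a b => a ∈ X ∧ b ∈ X ∧ A a b) v w → f v < f w := by
    intro w hw
    induction hw with
    | single h' => exact h _ h'.1 _ h'.2.1 h'.2.2
    | tail _ h' ih => exact ih.trans (h _ h'.1 _ h'.2.1 h'.2.2)
  exact lt_irrefl _ (key v hT)


theorem wag_arcs_lo : ∀ a b : ZMod 8, a.val < 4 → b.val < 4 →
    (a ≠ b ∧ ((b = a + 1 ∨ b = a + 4) ∨ (a = b + 1 ∨ a = b + 4))) →
    (a = 0 ∧ b = 1) ∨ (a = 1 ∧ b = 0) ∨ (a = 1 ∧ b = 2) ∨ (a = 2 ∧ b = 1) ∨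
    (a = 2 ∧ b = 3) ∨ (a = 3 ∧ b = 2) := by decide

theorem wag_arcs_hi : ∀ a b : ZMod 8, ¬ a.val < 4 → ¬ b.val < 4 →
    (a ≠ b ∧ ((b = a + 1 ∨ b = a + 4) ∨ (a = b + 1 ∨ a = b + 4))) →
    (a = 4 ∧ b = 5) ∨ (a = 5 ∧ b = 4) ∨ (a = 5 ∧ b = 6) ∨ (a = 6 ∧ b = 5) ∨
    (a = 6 ∧ b = 7) ∨ (a = 7 ∧ b = 6) := by decide

/-- every orientation of V8 admits an acyclic 2-colouring. -/
theorem stmt_3 (A : ZMod 8 → ZMod 8 → Prop) (hA : IsOrientation WagnerGraph A) :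
    ∃ c : ZMod 8 → Fin 2, IsAcyclicColoring A 2 c := by
  classical
  use fun v => if v.val < 4 then 0 else 1
  have anti := hA.1
  set e : ZMod 8 → ℤ := fun i => if A i (i + 1) then 1 else -1 with he
  have epos : ∀ i, A i (i+1) → e i = 1 := fun i h => if_pos h
  have eneg : ∀ i, A (i+1) i → e i = -1 := fun i h => if_neg (anti _ _ h)
  intro i
  fin_cases i
  · apply acyclicOn_of_mono _ _
      (fun x => if x = 1 then e 0 else if x = 2 then e 0 + e 1
        else if x = 3 then e 0 + e 1 + e 2 else 0)
    intro a ha b hb hab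
    have h2 : WagnerGraph.Adj a b := (hA.2 a b).2 (Or.inl hab)
    rw [WagnerGraph, SimpleGraph.fromRel_adj] at h2
    simp only [Set.mem_setOf_eq] at ha hb
    have ha' : a.val < 4 := by by_contra h; simp [h] at ha
    have hb' : b.val < 4 := by by_contra h; simp [h] at hb
    rcases wag_arcs_lo a b ha' hb' h2 with ⟨h3,h4⟩|⟨h3,h4⟩|⟨h3,h4⟩|⟨h3,h4⟩|⟨h3,h4⟩|⟨h3,h4⟩ <;>
      subst h3 <;> subst h4 <;>
      simp (config := { decide := true }) <;>
      [rw [epos 0 (by exact_mod_cast hab)]; rw [eneg 0 (by exact_mod_cast hab)];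
       rw [epos 1 (by exact_mod_cast hab)]; rw [eneg 1 (by exact_mod_cast hab)];
       rw [epos 2 (by exact_mod_cast hab)]; rw [eneg 2 (by exact_mod_cast hab)]] <;>
      omega
  · apply acyclicOn_of_mono _ _
      (fun x => if x = 5 then e 4 else if x = 6 then e 4 + e 5
        else if x = 7 then e 4 + e 5 + e 6 else 0)
    intro a ha b hb hab
    have h2 : WagnerGraph.Adj a b := (hA.2 a b).2 (Or.inl hab)
    rw [WagnerGraph, SimpleGraph.fromRel_adj] at h2
    simp only [Set.mem_setOf_eq] at ha hb
    have ha' : ¬ a.val < 4 := by by_contra h; simp [h] at ha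
    have hb' : ¬ b.val < 4 := by by_contra h; simp [h] at hb
    rcases wag_arcs_hi a b ha' hb' h2 with ⟨h3,h4⟩|⟨h3,h4⟩|⟨h3,h4⟩|⟨h3,h4⟩|⟨h3,h4⟩|⟨h3,h4⟩ <;>
      subst h3 <;> subst h4 <;>
      simp (config := { decide := true }) <;>
      [rw [epos 4 (by exact_mod_cast hab)]; rw [eneg 4 (by exact_mod_cast hab)];
       rw [epos 5 (by exact_mod_cast hab)]; rw [eneg 5 (by exact_mod_cast hab)];
       rw [epos 6 (by exact_mod_cast hab)]; rw [eneg 6 (by exact_mod_cast hab)]] <;>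
      omega
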